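/- If an admissible path in a finitely separated graph (E, C) passes through some vertex v at least three times (counting occurrences of v as intermediate vertex, source, or range), then v admits a cycle, i.e. there is a closed path γ based at v with γγ admissible. -/

import Mathlib

namespace SepGraphStmt

/-- A finitely separated graph: a directed graph with a colouring of the edges
such that edges of the same colour have the same range, and each colour class is finite.
(The colour classes with range `v` form the partition `C_v` of `r⁻¹(v)`.) -/
structure SepGraph (V E Λ : Type) where
  r : E → V
  s : E → V
  col : E → Λ
  col_range : ∀ e f, col e = col f → r e = r f
  col_finite : ∀ l : Λ, {e : E | col e = l}.Finite

variable {V E Λ : Type}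

/-- A letter of the double graph: an edge together with a direction
(`true` = the edge itself, `false` = its formal inverse). -/
abbrev Letter (E : Type) := E × Bool

def src (G : SepGraph V E Λ) (a : Letter E) : V :=
  if a.2 then G.s a.1 else G.r a.1

def rng (G : SepGraph V E Λ) (a : Letter E) : V :=
  if a.2 then G.r a.1 else G.s a.1

/-- Letter `b` may follow letter `a` in an admissible path
(words are written in application order: the first letter of a list is traversed first). -/
def ok (G : SepGraph V E Λ) (a b : Letter E) : Prop :=
  src G b = rng G a ∧
    (a.2 = false → b.2 = true → b.1 ≠ a.1) ∧
    (a.2 = true → b.2 = false → G.col b.1 ≠ G.col a.1)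

def Admissible (G : SepGraph V E Λ) (w : List (Letter E)) : Prop :=
  List.Chain' (ok G) w

/-- Formal inverse of a word. -/
def wInv (w : List (Letter E)) : List (Letter E) :=
  (w.map fun a => (a.1, !a.2)).reverse

/-- The source of the (nonempty) word is `v`. -/
def headIs (G : SepGraph V E Λ) (w : List (Letter E)) (v : V) : Prop :=
  ∀ a ∈ w.head?, src G a = v

/-- The range of the (nonempty) word is `v`. -/
def lastIs (G : SepGraph V E Λ) (w : List (Letter E)) (v : V) : Prop :=
  ∀ a ∈ w.getLast?, rng G a = v

/-- `w` is an admissible path from `u` to `v`. -/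
def IsPath (G : SepGraph V E Λ) (w : List (Letter E)) (u v : V) : Prop :=
  Admissible G w ∧ (w = [] → u = v) ∧ headIs G w u ∧ lastIs G w v

/-- `w` is a closed path based at `v`. -/
def IsClosed (G : SepGraph V E Λ) (w : List (Letter E)) (v : V) : Prop :=
  w ≠ [] ∧ Admissible G w ∧ headIs G w v ∧ lastIs G w v

/-- `w` is a cycle: a nontrivial path whose square is admissible. -/
def IsCycle (G : SepGraph V E Λ) (w : List (Letter E)) : Prop :=
  w ≠ [] ∧ Admissible G (w ++ w)

/-- `w` is a cycle based at `v`. -/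
def CycleAt (G : SepGraph V E Λ) (w : List (Letter E)) (v : V) : Prop :=
  IsCycle G w ∧ headIs G w v

/-- A nontrivial admissible path `w` allows a return: some `βw` is a closed path. -/
def AllowsReturn (G : SepGraph V E Λ) (w : List (Letter E)) : Prop :=
  w ≠ [] ∧ Admissible G w ∧ ∃ b u, IsClosed G (w ++ b) u

/-- A "returning item" at `v`: either an edge in `s⁻¹(v)` allowing a return,
or a colour class `X ∈ C_v` allowing a return. -/
def RetItem (G : SepGraph V E Λ) (v : V) : E ⊕ Λ → Prop
  | Sum.inl e => G.s e = v ∧ AllowsReturn G [(e, true)]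
  | Sum.inr l => ∃ e, G.col e = l ∧ G.r e = v ∧ AllowsReturn G [(e, false)]

/-- `v` is a branching vertex. -/
def Branching (G : SepGraph V E Λ) (v : V) : Prop :=
  ∃ x y z : E ⊕ Λ, x ≠ y ∧ x ≠ z ∧ y ≠ z ∧
    RetItem G v x ∧ RetItem G v y ∧ RetItem G v z

/-- The relation `u ⊸ v`: there is an admissible path `α : u → v` and a cycle `β`
based at `v` such that `α⁻¹βα` is admissible. -/
def Multimap (G : SepGraph V E Λ) (u v : V) : Prop :=
  ∃ α β, IsPath G α u v ∧ CycleAt G β v ∧ Admissible G (α ++ β ++ wInv α)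

/-- A word is positively oriented w.r.t. an orientation `o`. -/
def Pos (o : E → Bool) (w : List (Letter E)) : Prop := ∀ a ∈ w, a.2 = o a.1

/-- A word is negatively oriented w.r.t. an orientation `o`. -/
def Neg (o : E → Bool) (w : List (Letter E)) : Prop := ∀ a ∈ w, a.2 = !o a.1

/-- `o` is an orientation at `v` (Definition of orientation, with (2')). -/
def OrientAt (G : SepGraph V E Λ) (o : E → Bool) (v : V) : Prop :=
  ((∃ l : Λ, (∃ e, G.col e = l) ∧ (∀ e, (G.r e = v ∧ o e = false) ↔ G.col e = l)) ∧
    ∀ e, G.s e = v → o e = false) ∨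
  ((∀ e, G.r e = v → o e = true) ∧
    ∀ e f, G.s e = v → G.s f = v → o e = true → o f = true → e = f)

/-- `o` is a proper orientation at `v`. -/
def ProperOrientAt (G : SepGraph V E Λ) (o : E → Bool) (v : V) : Prop :=
  ((∃ l : Λ, (∃ e, G.col e = l) ∧ (∀ e, (G.r e = v ∧ o e = false) ↔ G.col e = l)) ∧
    ∀ e, G.s e = v → o e = false) ∨
  ((∀ e, G.r e = v → o e = true) ∧ ∃! e, G.s e = v ∧ o e = true)

/-- `w` is a base-simple closed path at `v`. -/
def BaseSimple (G : SepGraph V E Λ) (w : List (Letter E)) (v : V) : Prop :=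
  IsClosed G w v ∧
    ∀ p, p ≠ [] → p.length < w.length → p <+: w → ¬ lastIs G p v



section Aux

variable {G : SepGraph V E Λ} {v : V}

private lemma head?_append_left {α : Type*} {l l' : List α} (h : l ≠ []) :
    (l ++ l').head? = l.head? := by
  cases l <;> simp_all

private lemma split1 {α β : Type*} [DecidableEq β] (f : α → β) (v : β) :
    ∀ (w : List α), 1 ≤ (w.map f).count v → ∃ p x q, w = p ++ x :: q ∧ f x = v := by
  intro w
  induction w with
  | nil => simp
  | cons a t ih =>
    intro h
    by_cases hfa : f a = v
    · exact ⟨[], a, t, rfl, hfa⟩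
    · rw [List.map_cons, List.count_cons_of_ne hfa] at h
      obtain ⟨p, x, q, rfl, hx⟩ := ih h
      exact ⟨a :: p, x, q, rfl, hx⟩

private lemma split2 {α β : Type*} [DecidableEq β] (f : α → β) (v : β) :
    ∀ (w : List α), 2 ≤ (w.map f).count v →
      ∃ p x q y r, w = p ++ x :: q ++ y :: r ∧ f x = v ∧ f y = v := by
  intro w
  induction w with
  | nil => simp
  | cons a t ih =>
    intro h
    by_cases hfa : f a = v
    · rw [List.map_cons, hfa, List.count_cons_self] at h
      obtain ⟨q, y, r, rfl, hy⟩ := split1 f v t (by omega)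
      exact ⟨[], a, q, y, r, rfl, hfa, hy⟩
    · rw [List.map_cons, List.count_cons_of_ne hfa] at h
      obtain ⟨p, x, q, y, r, rfl, hx, hy⟩ := ih h
      exact ⟨a :: p, x, q, y, r, rfl, hx, hy⟩

private lemma split3 {α β : Type*} [DecidableEq β] (f : α → β) (v : β) :
    ∀ (w : List α), 3 ≤ (w.map f).count v →
      ∃ p x q y r z s, w = p ++ x :: q ++ y :: r ++ z :: s ∧ f x = v ∧ f y = v ∧ f z = v := by
  intro w
  induction w with
  | nil => simp
  | cons a t ih =>
    intro h
    by_cases hfa : f a = v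
    · rw [List.map_cons, hfa, List.count_cons_self] at h
      obtain ⟨q, y, r, z, s, rfl, hy, hz⟩ := split2 f v t (by omega)
      exact ⟨[], a, q, y, r, z, s, rfl, hfa, hy, hz⟩
    · rw [List.map_cons, List.count_cons_of_ne hfa] at h
      obtain ⟨p, x, q, y, r, z, s, rfl, hx, hy, hz⟩ := ih h
      exact ⟨a :: p, x, q, y, r, z, s, rfl, hx, hy, hz⟩

/-- The key combinatorial fact at a vertex. -/
private lemma key (G : SepGraph V E Λ) {v : V} {a₁ a₂ b₁ b₂ : Letter E}
    (s₁ : src G a₁ = v) (r₁ : rng G b₁ = v) (r₂ : rng G b₂ = v)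
    (s₂ : src G a₂ = v) (h : ok G b₁ a₂) :
    ok G b₁ a₁ ∨ ok G b₂ a₂ ∨ ok G b₂ a₁ := by
  by_contra hc
  push_neg at hc
  obtain ⟨n1, n2, n3⟩ := hc
  obtain ⟨e₁, t₁⟩ := a₁; obtain ⟨e₂, t₂⟩ := a₂
  obtain ⟨f₁, u₁⟩ := b₁; obtain ⟨f₂, u₂⟩ := b₂
  simp only [ok, s₁, r₁, r₂, s₂] at h n1 n2 n3
  cases t₁ <;> cases t₂ <;> cases u₁ <;> cases u₂ <;> simp_all

/-- Two consecutive closed paths based at `v` give a cycle at `v`. -/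
private lemma closed_pair (G : SepGraph V E Λ) {v : V} {γ₁ γ₂ : List (Letter E)}
    (h₁ : γ₁ ≠ []) (h₂ : γ₂ ≠ [])
    (hadm : Admissible G (γ₁ ++ γ₂))
    (hhead : headIs G γ₁ v) (hlast₁ : lastIs G γ₁ v) (hlast₂ : lastIs G γ₂ v) :
    ∃ γ : List (Letter E), CycleAt G γ v := by
  set a₁ := γ₁.head h₁ with ha₁
  set b₁ := γ₁.getLast h₁ with hb₁
  set a₂ := γ₂.head h₂ with ha₂
  set b₂ := γ₂.getLast h₂ with hb₂
  have hh₁ : γ₁.head? = some a₁ := List.head?_eq_head h₁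
  have hg₁ : γ₁.getLast? = some b₁ := List.getLast?_eq_getLast h₁
  have hh₂ : γ₂.head? = some a₂ := List.head?_eq_head h₂
  have hg₂ : γ₂.getLast? = some b₂ := List.getLast?_eq_getLast h₂
  have s₁ : src G a₁ = v := hhead a₁ (by rw [hh₁]; rfl)
  have r₁ : rng G b₁ = v := hlast₁ b₁ (by rw [hg₁]; rfl)
  have r₂ : rng G b₂ = v := hlast₂ b₂ (by rw [hg₂]; rfl)
  rw [Admissible, List.Chain', List.isChain_append] at hadm
  obtain ⟨adm₁, adm₂, hjun⟩ := hadm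
  have hok : ok G b₁ a₂ := hjun b₁ (by rw [hg₁]; rfl) a₂ (by rw [hh₂]; rfl)
  have s₂ : src G a₂ = v := by rw [hok.1, r₁]
  rcases key G s₁ r₁ r₂ s₂ hok with k1 | k2 | k3
  · refine ⟨γ₁, ⟨h₁, ?_⟩, hhead⟩
    rw [Admissible, List.Chain', List.isChain_append]
    refine ⟨adm₁, adm₁, ?_⟩
    intro x hx y hy
    rw [hg₁] at hx; rw [hh₁] at hy
    cases hx; cases hy; exact k1
  · refine ⟨γ₂, ⟨h₂, ?_⟩, ?_⟩
    · rw [Admissible, List.Chain', List.isChain_append]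
      refine ⟨adm₂, adm₂, ?_⟩
      intro x hx y hy
      rw [hg₂] at hx; rw [hh₂] at hy
      cases hx; cases hy; exact k2
    · intro a ha; rw [hh₂] at ha; cases ha; exact s₂
  · refine ⟨γ₁ ++ γ₂, ⟨by simp [h₁], ?_⟩, ?_⟩
    · rw [Admissible, List.Chain', List.isChain_append]
      refine ⟨?_, ?_, ?_⟩
      · rw [List.isChain_append]; exact ⟨adm₁, adm₂, hjun⟩
      · rw [List.isChain_append]; exact ⟨adm₁, adm₂, hjun⟩
      · intro x hx y hy
        rw [List.getLast?_append_of_ne_nil _ h₂, hg₂] at hx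
        rw [head?_append_left h₁, hh₁] at hy
        cases hx; cases hy; exact k3
    · intro a ha
      rw [head?_append_left h₁, hh₁] at ha
      cases ha; exact s₁

end Aux

/-- If an admissible path passes through a vertex `v` at least three times
(counting the source and the ranges of all its letters), then `v` admits a cycle. -/
theorem stmt17 {V E Λ : Type} [DecidableEq V] (G : SepGraph V E Λ)
    (w : List (Letter E)) (hw : Admissible G w) (v : V)
    (hcount : 3 ≤ (w.head?.map (src G)).toList.count v + (w.map (rng G)).count v) :
    ∃ γ : List (Letter E), CycleAt G γ v := by
  match w with
  | [] => simp at hcount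
  | a :: t =>
    by_cases hv : src G a = v
    · -- head is at v; two more visits among ranges
      have hle : (Option.map (src G) (a :: t).head?).toList.count v ≤ 1 := by
        simp only [List.head?_cons, Option.map_some, Option.toList_some]
        exact List.count_le_length.trans (by simp)
      have hc2 : 2 ≤ ((a :: t).map (rng G)).count v := by omega
      obtain ⟨p, x, q, y, r, hsplit, hx, hy⟩ := split2 (rng G) v (a :: t) hc2
      have hne₁ : p ++ [x] ≠ ([] : List (Letter E)) := by simp
      have hne₂ : q ++ [y] ≠ ([] : List (Letter E)) := by simp
      have hsplit' : a :: t = (p ++ [x]) ++ ((q ++ [y]) ++ r) := by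
        simp [hsplit]
      rw [hsplit', Admissible, List.Chain', List.isChain_append] at hw
      obtain ⟨adm₁, adm₂, hjun⟩ := hw
      rw [List.isChain_append] at adm₂
      obtain ⟨adm₂', adm₃, hjun'⟩ := adm₂
      refine closed_pair G hne₁ hne₂ ?_ ?_ ?_ ?_
      · rw [Admissible, List.Chain', List.isChain_append]
        exact ⟨adm₁, adm₂', fun b hb c hc => hjun b hb c (by rwa [head?_append_left hne₂])⟩
      · intro b hb
        have hha : (p ++ [x]).head? = some a := by
          rw [← head?_append_left (l' := (q ++ [y]) ++ r) hne₁, ← hsplit']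
          rfl
        rw [hha] at hb
        cases hb; exact hv
      · intro b hb
        rw [List.getLast?_concat] at hb
        cases hb; exact hx
      · intro b hb
        rw [List.getLast?_concat] at hb
        cases hb; exact hy
    · -- three visits among ranges
      have h0 : (Option.map (src G) (a :: t).head?).toList.count v = 0 := by
        simp only [List.head?_cons, Option.map_some, Option.toList_some]
        exact List.count_eq_zero.mpr (by simp; exact fun h => hv h.symm)
      have hc3 : 3 ≤ ((a :: t).map (rng G)).count v := by omega
      obtain ⟨p, x, q, y, r, z, s, hsplit, hx, hy, hz⟩ := split3 (rng G) v (a :: t) hc3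
      have hne₁ : q ++ [y] ≠ ([] : List (Letter E)) := by simp
      have hne₂ : r ++ [z] ≠ ([] : List (Letter E)) := by simp
      have hsplit' : a :: t = (p ++ [x]) ++ (((q ++ [y]) ++ (r ++ [z])) ++ s) := by
        simp [hsplit]
      rw [hsplit', Admissible, List.Chain', List.isChain_append] at hw
      obtain ⟨adm₀, adm₂, hjun⟩ := hw
      rw [List.isChain_append] at adm₂
      obtain ⟨admmid, adms, hjun'⟩ := adm₂
      have hh : (((q ++ [y]) ++ (r ++ [z])) ++ s).head? = (q ++ [y]).head? := by
        rw [head?_append_left (by simp : (q ++ [y]) ++ (r ++ [z]) ≠ ([] : List (Letter E))),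
          head?_append_left hne₁]
      refine closed_pair G hne₁ hne₂ admmid ?_ ?_ ?_
      · intro b hb
        have hok : ok G x b := by
          refine hjun x ?_ b ?_
          · rw [List.getLast?_concat]; rfl
          · rw [hh]; exact hb
        rw [hok.1, hx]
      · intro b hb
        rw [List.getLast?_concat] at hb
        cases hb; exact hy
      · intro b hb
        rw [List.getLast?_concat] at hb
        cases hb; exact hz

end SepGraphStmt
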